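/- arXiv:1705.07861 — 2 statements merged into one kernel-verified Lean document; each statement's English description precedes it below -/
import Mathlib

section
/- Let G be a simple graph on a finite vertex set V, let q ∈ [0,1], let r ≥ 1 be an integer, and suppose that for each vertex v ∈ V and each round i ∈ {1, …, r} an independent Bernoulli(q) mark M(v,i) is drawn (product measure over all pairs (v,i)). Say that a vertex u never marks if M(u,i) = 0 for all i. Let P ⊆ V be a set of vertices that are pairwise at graph distance at least 3 from each other (distance between unreachable vertices counting as infinite), and let s ≥ 0 be an integer. Then the probability that every v ∈ P has at least s neighbors that never mark is at most ∏_{v ∈ P} ( C(deg(v), s) · (1−q)^(r·s) ), where deg(v) is the degree of v and C(·,·) is the binomial coefficient. -/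
open MeasureTheory
open scoped ENNReal

/-- With independent Bernoulli(q) marks `M(v,i)` for vertices `v` and rounds
`i ∈ {1,…,r}`, and `P` a set of vertices pairwise at graph distance at least 3, the
probability that every `v ∈ P` has at least `s` neighbors that never mark is at most
`∏_{v ∈ P} C(deg(v), s)·(1−q)^(r·s)`. -/
theorem stmt_6 {V : Type*} [Fintype V] [DecidableEq V] (G : SimpleGraph V)
    [DecidableRel G.Adj] (q : ℝ≥0∞) (hq : q ≤ 1) (r : ℕ) (hr : 1 ≤ r)
    (P : Finset V) (hP : ∀ u ∈ P, ∀ v ∈ P, u ≠ v → 3 ≤ G.edist u v) (s : ℕ) :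
    Measure.pi (fun _ : V × Fin r => (PMF.bernoulli q.toNNReal (by simpa using ENNReal.toNNReal_mono ENNReal.one_ne_top hq)).toMeasure)
      {M : V × Fin r → Bool | ∀ v ∈ P,
        s ≤ ((G.neighborFinset v).filter fun u => ∀ i : Fin r, M (u, i) = false).card}
      ≤ ∏ v ∈ P, ((G.degree v).choose s : ℝ≥0∞) * (1 - q) ^ (r * s) := by
  classical
  set μ := Measure.pi (fun _ : V × Fin r => (PMF.bernoulli q.toNNReal (by simpa using ENNReal.toNNReal_mono ENNReal.one_ne_top hq)).toMeasure) with hμ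
  -- disjoint neighborhoods
  have hdisj : ∀ u ∈ P, ∀ v ∈ P, u ≠ v →
      Disjoint (G.neighborFinset u) (G.neighborFinset v) := by
    intro u hu v hv huv
    rw [Finset.disjoint_left]
    intro w hwu hwv
    rw [SimpleGraph.mem_neighborFinset] at hwu hwv
    have h1 : G.edist u w ≤ 1 := by
      rw [← SimpleGraph.edist_eq_one_iff_adj] at hwu; exact le_of_eq hwu
    have h2 : G.edist w v ≤ 1 := by
      rw [← SimpleGraph.edist_eq_one_iff_adj] at hwv
      rw [SimpleGraph.edist_comm] at hwv; exact le_of_eq hwv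
    have := hP u hu v hv huv
    have htri := SimpleGraph.edist_triangle (G := G) (u := u) (v := w) (w := v)
    have : (3 : ℕ∞) ≤ 2 := le_trans this (le_trans htri (by
      calc G.edist u w + G.edist w v ≤ 1 + 1 := add_le_add h1 h2
      _ = 2 := by norm_num))
    norm_num at this
  -- the finite set of choice functions
  set C : Finset (V → Finset V) :=
    Fintype.piFinset (fun v : V => if v ∈ P then (G.neighborFinset v).powersetCard s
      else {∅}) with hC
  -- for c ∈ C, the product event
  set A : (V → Finset V) → Set (V × Fin r → Bool) := fun c =>
    Set.pi Set.univ (fun p : V × Fin r =>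
      if p.1 ∈ P.biUnion c then ({false} : Set Bool) else Set.univ) with hA
  -- event inclusion
  have hsub : {M : V × Fin r → Bool | ∀ v ∈ P,
      s ≤ ((G.neighborFinset v).filter fun u => ∀ i : Fin r, M (u, i) = false).card}
      ⊆ ⋃ c ∈ C, A c := by
    intro M hM
    have hex : ∀ v : V, ∃ t : Finset V,
        (v ∈ P → (t ⊆ ((G.neighborFinset v).filter fun u => ∀ i : Fin r, M (u, i) = false)
          ∧ t.card = s)) ∧ (v ∉ P → t = ∅) := by
      intro v
      by_cases hv : v ∈ P
      · obtain ⟨t, ht, htc⟩ := Finset.exists_subset_card_eq (hM v hv)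
        exact ⟨t, fun _ => ⟨ht, htc⟩, fun h => absurd hv h⟩
      · exact ⟨∅, fun h => absurd h hv, fun _ => rfl⟩
    choose c hc1 hc2 using hex
    refine Set.mem_biUnion (show c ∈ C from ?_) ?_
    · rw [hC, Fintype.mem_piFinset]
      intro v
      by_cases hv : v ∈ P
      · simp only [hv, if_true, Finset.mem_powersetCard]
        exact ⟨(hc1 v hv).1.trans (Finset.filter_subset _ _), (hc1 v hv).2⟩
      · simp [hv, hc2 v hv]
    · intro p _
      by_cases hp : p.1 ∈ P.biUnion c
      · simp only [hp, if_true, Set.mem_singleton_iff]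
        obtain ⟨v, hv, hpv⟩ := Finset.mem_biUnion.1 hp
        have := (hc1 v hv).1 hpv
        rw [Finset.mem_filter] at this
        exact (show M (p.1, p.2) = false from this.2 p.2)
      · simp [hp]
  -- measure of each A c
  have hAc : ∀ c ∈ C, μ (A c) = (1 - q) ^ (r * (s * P.card)) := by
    intro c hcC
    rw [hC, Fintype.mem_piFinset] at hcC
    have hcard : ∀ v ∈ P, (c v).card = s := by
      intro v hv
      have := hcC v; rw [if_pos hv, Finset.mem_powersetCard] at this; exact this.2
    have hsubn : ∀ v ∈ P, c v ⊆ G.neighborFinset v := by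
      intro v hv
      have := hcC v; rw [if_pos hv, Finset.mem_powersetCard] at this; exact this.1
    have hT : (P.biUnion c).card = s * P.card := by
      rw [Finset.card_biUnion, Finset.sum_congr rfl hcard, Finset.sum_const, smul_eq_mul,
        mul_comm]
      intro u hu v hv huv
      exact Finset.disjoint_of_subset_left (hsubn u hu)
        (Finset.disjoint_of_subset_right (hsubn v hv) (hdisj u hu v hv huv))
    rw [hA, hμ, Measure.pi_pi]
    have hval : ∀ p : V × Fin r, (PMF.bernoulli q.toNNReal (by simpa using ENNReal.toNNReal_mono ENNReal.one_ne_top hq)).toMeasure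
        (if p.1 ∈ P.biUnion c then ({false} : Set Bool) else Set.univ)
        = if p.1 ∈ P.biUnion c then 1 - q else 1 := by
      intro p
      by_cases hp : p.1 ∈ P.biUnion c
      · rw [if_pos hp, if_pos hp,
          PMF.toMeasure_apply_singleton _ _ (measurableSet_singleton _)]
        refine (PMF.bernoulli_apply _ false).trans ?_
        simp [ENNReal.coe_sub, ENNReal.coe_toNNReal (ne_top_of_le_ne_top ENNReal.one_ne_top hq)]
      · rw [if_neg hp, if_neg hp, measure_univ]
    calc (∏ p : V × Fin r, (PMF.bernoulli q.toNNReal (by simpa using ENNReal.toNNReal_mono ENNReal.one_ne_top hq)).toMeasure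
          (if p.1 ∈ P.biUnion c then ({false} : Set Bool) else Set.univ))
        = ∏ p : V × Fin r, if p.1 ∈ P.biUnion c then 1 - q else 1 :=
          Finset.prod_congr rfl fun p _ => hval p
      _ = ∏ u : V, ∏ i : Fin r, (if u ∈ P.biUnion c then 1 - q else 1) := by
          rw [Fintype.prod_prod_type]
      _ = ∏ u : V, (if u ∈ P.biUnion c then (1 - q) ^ r else 1) := by
          refine Finset.prod_congr rfl fun u _ => ?_
          by_cases hu : u ∈ P.biUnion c <;> simp [hu]
      _ = ∏ u ∈ P.biUnion c, (1 - q) ^ r := by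
          rw [← Finset.prod_filter, Finset.filter_mem_eq_inter, Finset.univ_inter]
      _ = (1 - q) ^ (r * (s * P.card)) := by
          rw [Finset.prod_const, hT, ← pow_mul, mul_comm r]
  -- card of C
  have hCcard : (C.card : ℝ≥0∞) = ∏ v ∈ P, ((G.degree v).choose s : ℝ≥0∞) := by
    rw [hC, Fintype.card_piFinset]
    push_cast
    have hv' : ∀ v : V, ((if v ∈ P then (G.neighborFinset v).powersetCard s
        else {∅}).card : ℝ≥0∞) = if v ∈ P then ((G.degree v).choose s : ℝ≥0∞) else 1 := by
      intro v
      by_cases hv : v ∈ P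
      · rw [if_pos hv, if_pos hv, Finset.card_powersetCard]; rfl
      · rw [if_neg hv, if_neg hv, Finset.card_singleton, Nat.cast_one]
    rw [Finset.prod_congr rfl fun v _ => hv' v, ← Finset.prod_filter,
      Finset.filter_mem_eq_inter, Finset.univ_inter]
  calc μ _ ≤ μ (⋃ c ∈ C, A c) := measure_mono hsub
    _ ≤ ∑ c ∈ C, μ (A c) := measure_biUnion_finset_le C A
    _ = ∑ c ∈ C, (1 - q) ^ (r * (s * P.card)) := Finset.sum_congr rfl hAc
    _ = (C.card : ℝ≥0∞) * (1 - q) ^ (r * (s * P.card)) := by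
        rw [Finset.sum_const, nsmul_eq_mul]
    _ = ∏ v ∈ P, ((G.degree v).choose s : ℝ≥0∞) * (1 - q) ^ (r * s) := by
        rw [hCcard, Finset.prod_mul_distrib, Finset.prod_const, ← pow_mul,
          mul_assoc r s P.card]
end

section
/- Let G be a finite simple graph and v a vertex of G. Then the product, over all neighbors u of v whose degree satisfies deg(u) ≥ deg(v), of (1 − 1/(2·deg(u))), is at least 1/2. -/
/-- In a finite simple graph, for any vertex `v`, the product over neighbors
`u` of `v` with `deg(u) ≥ deg(v)` of `(1 − 1/(2·deg(u)))` is at least `1/2`. -/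
theorem stmt_8 {V : Type*} [Fintype V] (G : SimpleGraph V) [DecidableRel G.Adj] (v : V) :
    (1 : ℝ) / 2 ≤
      ∏ u ∈ (G.neighborFinset v).filter (fun u => G.degree v ≤ G.degree u),
        (1 - (1 : ℝ) / (2 * G.degree u)) := by
  set d := G.degree v with hd
  set s := (G.neighborFinset v).filter (fun u => G.degree v ≤ G.degree u) with hs
  by_cases hd0 : d = 0
  · have : s = ∅ := by
      rw [hs, Finset.filter_eq_empty_iff]
      intro u hu
      exact absurd (Finset.card_eq_zero.mp (hd0 ▸ (G.card_neighborFinset_eq_degree v)))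
        (Finset.ne_empty_of_mem hu)
    rw [this, Finset.prod_empty]; norm_num
  · have hd1 : (1 : ℝ) ≤ d := by
      exact_mod_cast Nat.one_le_iff_ne_zero.mpr hd0
    have hdpos : (0 : ℝ) < d := by linarith
    have hc : (1 : ℝ) - 1 / (2 * d) ∈ Set.Icc (0:ℝ) 1 := by
      constructor
      · have : 1 / (2 * (d:ℝ)) ≤ 1 := by
          rw [div_le_one (by linarith)]; linarith
        linarith
      · have : 0 < 1 / (2 * (d:ℝ)) := by positivity
        linarith
    have hcard : s.card ≤ d := by
      calc s.card ≤ (G.neighborFinset v).card := Finset.card_filter_le _ _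
        _ = d := G.card_neighborFinset_eq_degree v
    have hkey : ∀ u ∈ s, (1 : ℝ) - 1 / (2 * d) ≤ 1 - 1 / (2 * G.degree u) := by
      intro u hu
      have hdu : d ≤ G.degree u := (Finset.mem_filter.mp hu).2
      have hdu' : (d : ℝ) ≤ G.degree u := by exact_mod_cast hdu
      have h2 : (1:ℝ) / (2 * G.degree u) ≤ 1 / (2 * d) := by
        apply div_le_div_of_nonneg_left (by norm_num) (by linarith) (by linarith)
      linarith
    calc (1 : ℝ) / 2 = 1 + (d : ℝ) * (-(1 / (2 * d))) := by
          field_simp; ring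
      _ ≤ (1 + (-(1 / (2 * (d:ℝ)))))^(d:ℕ) := by
          apply one_add_mul_le_pow (by nlinarith [hc.1]) d
      _ = ((1:ℝ) - 1 / (2 * d))^(d:ℕ) := by ring_nf
      _ ≤ ((1:ℝ) - 1 / (2 * d))^(s.card) := pow_le_pow_of_le_one hc.1 hc.2 hcard
      _ = ∏ _u ∈ s, ((1:ℝ) - 1 / (2 * d)) := (Finset.prod_const _).symm
      _ ≤ ∏ u ∈ s, (1 - (1 : ℝ) / (2 * G.degree u)) :=
          Finset.prod_le_prod (fun u hu => hc.1) hkey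
end
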